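/- For a family of closed intervals on ℝ in which every point of ℝ lies in at most two intervals (no three intervals share a common point), the minimum number of points needed to pierce all intervals is at least ⌈k/2⌉ where k is the number of intervals, and equals k − M where M is the maximum size of a matching in the intersection graph of the intervals. -/
import Mathlib


/-- A matching in the intersection graph of the intervals `[l j, r j]`: a finite set of
ordered pairs `(e.1, e.2)` with `e.1 < e.2`, each pair intersecting, and no two pairs
sharing an endpoint. -/
def IsIntervalMatching (k : ℕ) (l r : Fin k → ℝ) (E : Finset (Fin k × Fin k)) : Prop :=
  (∀ e ∈ E, e.1 < e.2 ∧ (Set.Icc (l e.1) (r e.1) ∩ Set.Icc (l e.2) (r e.2)).Nonempty) ∧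
  (∀ e ∈ E, ∀ e' ∈ E, e ≠ e' →
    e.1 ≠ e'.1 ∧ e.1 ≠ e'.2 ∧ e.2 ≠ e'.1 ∧ e.2 ≠ e'.2)

/-- For a family of `k` closed intervals in which no point lies in three
intervals, every piercing set has size at least `⌈k/2⌉` and at least `k − M`, and some
piercing set has size exactly `k − M`, where `M` is the maximum matching size of the
intersection graph. -/
theorem piercing_number_eq_k_sub_matching (k M : ℕ) (l r : Fin k → ℝ)
    (hlr : ∀ j, l j ≤ r j)
    (hno3 : ∀ x : ℝ, {j : Fin k | x ∈ Set.Icc (l j) (r j)}.ncard ≤ 2)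
    (hM : IsGreatest {m | ∃ E : Finset (Fin k × Fin k),
        IsIntervalMatching k l r E ∧ E.card = m} M) :
    (∀ S : Finset ℝ, (∀ j, ∃ s ∈ S, s ∈ Set.Icc (l j) (r j)) →
        (k + 1) / 2 ≤ S.card ∧ k - M ≤ S.card) ∧
    ∃ S : Finset ℝ, (∀ j, ∃ s ∈ S, s ∈ Set.Icc (l j) (r j)) ∧ S.card = k - M := by
  classical
  obtain ⟨⟨E, hE, hEcard⟩, hMax⟩ := hM
  -- no point lies in three intervals
  have h3 : ∀ (x : ℝ) (a b c : Fin k), a ≠ b → a ≠ c → b ≠ c →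
      x ∈ Set.Icc (l a) (r a) → x ∈ Set.Icc (l b) (r b) → x ∈ Set.Icc (l c) (r c) → False := by
    intro x a b c hab hac hbc ha hb hc
    have hsub : ({a, b, c} : Set (Fin k)) ⊆ {j | x ∈ Set.Icc (l j) (r j)} := by
      intro j hj
      rcases hj with h | h | h <;> simp_all
    have h3' : ({a, b, c} : Set (Fin k)).ncard = 3 := by
      rw [Set.ncard_eq_three]; exact ⟨a, b, c, hab, hac, hbc, rfl⟩
    have hle := Set.ncard_le_ncard hsub (Set.toFinite _)
    have := hno3 x
    omega
  -- the matched vertices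
  set V : Finset (Fin k) := E.image Prod.fst ∪ E.image Prod.snd with hVdef
  have hfstcard : (E.image Prod.fst).card = M := by
    rw [Finset.card_image_of_injOn, hEcard]
    intro e he e' he' h
    by_contra hne
    exact ((hE.2 e he e' he' hne).1 h)
  have hsndcard : (E.image Prod.snd).card = M := by
    rw [Finset.card_image_of_injOn, hEcard]
    intro e he e' he' h
    by_contra hne
    exact ((hE.2 e he e' he' hne).2.2.2 h)
  have hVdisj : Disjoint (E.image Prod.fst) (E.image Prod.snd) := by
    rw [Finset.disjoint_left]
    intro j hj1 hj2
    obtain ⟨e, he, he1⟩ := Finset.mem_image.mp hj1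
    obtain ⟨e', he', he2⟩ := Finset.mem_image.mp hj2
    by_cases hee : e = e'
    · subst hee
      exact absurd (he1.trans he2.symm) (ne_of_lt (hE.1 e he).1)
    · exact (hE.2 e he e' he' hee).2.1 (he1.trans he2.symm)
  have hVcard : V.card = 2 * M := by
    rw [hVdef, Finset.card_union_of_disjoint hVdisj, hfstcard, hsndcard]; omega
  have h2M : 2 * M ≤ k := by
    have := Finset.card_le_univ V
    simpa [hVcard] using this
  constructor
  · -- lower bounds
    intro S hS
    choose f hfS hfIcc using hS
    set fib : ℝ → Finset (Fin k) := fun s => Finset.univ.filter (fun j => f j = s) with hfibdef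
    have hk : k = ∑ s ∈ S, (fib s).card := by
      have := Finset.card_eq_sum_card_fiberwise (f := f) (s := Finset.univ) (t := S)
        (fun j _ => hfS j)
      simpa using this
    have hfib2 : ∀ s, (fib s).card ≤ 2 := by
      intro s
      have hsub : (↑(fib s) : Set (Fin k)) ⊆ {j | s ∈ Set.Icc (l j) (r j)} := by
        intro j hj
        simp only [hfibdef, Finset.coe_filter, Set.mem_setOf_eq] at hj ⊢
        rw [← hj.2]; exact hfIcc j
      have := Set.ncard_le_ncard hsub (Set.toFinite _)
      rw [Set.ncard_coe_finset] at this
      exact this.trans (hno3 s)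
    have hfib3 : ∀ (s : ℝ) (a b c : Fin k), a ≠ b → a ≠ c → b ≠ c →
        f a = s → f b = s → f c = s → False := by
      intro s a b c hab hac hbc ha hb hc
      have hsub : ({a, b, c} : Finset (Fin k)) ⊆ fib s := by
        intro j hj
        simp only [Finset.mem_insert, Finset.mem_singleton] at hj
        rcases hj with h | h | h <;> subst h <;> simp [hfibdef, ha, hb, hc]
      have hcard : ({a, b, c} : Finset (Fin k)).card = 3 := by
        rw [Finset.card_insert_of_notMem (by simp [hab, hac]),
          Finset.card_insert_of_notMem (by simp [hbc]), Finset.card_singleton]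
      have := Finset.card_le_card hsub
      have := hfib2 s
      omega
    -- the induced matching
    set E' : Finset (Fin k × Fin k) :=
      Finset.univ.filter (fun e : Fin k × Fin k => e.1 < e.2 ∧ f e.1 = f e.2) with hE'def
    have hE'mem : ∀ e : Fin k × Fin k, e ∈ E' ↔ e.1 < e.2 ∧ f e.1 = f e.2 := by
      intro e; simp [hE'def]
    have hE'match : IsIntervalMatching k l r E' := by
      constructor
      · intro e he
        obtain ⟨hlt, hfe⟩ := (hE'mem e).mp he
        exact ⟨hlt, ⟨f e.1, hfIcc e.1, by rw [hfe]; exact hfIcc e.2⟩⟩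
      · intro e he e' he' hne
        obtain ⟨hlt, hfe⟩ := (hE'mem e).mp he
        obtain ⟨hlt', hfe'⟩ := (hE'mem e').mp he'
        refine ⟨?_, ?_, ?_, ?_⟩
        · intro h
          have h22 : e.2 ≠ e'.2 := fun h2 => hne (Prod.ext h h2)
          exact hfib3 (f e.1) e.1 e.2 e'.2 (ne_of_lt hlt) (ne_of_lt (h ▸ hlt')) h22
            rfl hfe.symm (by rw [← hfe', ← h])
        · intro h
          have hlt1 : e'.1 < e.1 := by rw [h]; exact hlt'
          exact hfib3 (f e.1) e.1 e.2 e'.1 (ne_of_lt hlt) (ne_of_gt hlt1)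
            (ne_of_gt (lt_trans hlt1 hlt)) rfl hfe.symm (by rw [hfe', ← h])
        · intro h
          have hlt2 : e.2 < e'.2 := by rw [h]; exact hlt'
          exact hfib3 (f e.1) e.1 e.2 e'.2 (ne_of_lt hlt)
            (ne_of_lt (lt_trans hlt hlt2)) (ne_of_lt hlt2)
            rfl hfe.symm (by rw [← hfe', ← h, ← hfe])
        · intro h
          have hlt3 : e'.1 < e.2 := by rw [h]; exact hlt'
          have h11 : e.1 ≠ e'.1 := fun h1 => hne (Prod.ext h1 h)
          exact hfib3 (f e.1) e.1 e.2 e'.1 (ne_of_lt hlt) h11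
            (ne_of_gt hlt3) rfl hfe.symm (by rw [hfe', ← h, ← hfe])
    have hE'M : E'.card ≤ M := hMax ⟨E', hE'match, rfl⟩
    -- points with two intervals
    set T : Finset ℝ := S.filter (fun s => 2 ≤ (fib s).card) with hTdef
    have hTS : T ⊆ S := Finset.filter_subset _ _
    have hTcard : T.card ≤ E'.card := by
      apply Finset.card_le_card_of_surjOn (fun e => f e.1)
      intro s hs
      simp only [Finset.coe_filter, Set.mem_setOf_eq, hTdef, Finset.mem_filter,
        Finset.mem_coe] at hs
      have hcard2 : (fib s).card = 2 := le_antisymm (hfib2 s) hs.2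
      obtain ⟨a, b, hab, hfab⟩ := Finset.card_eq_two.mp hcard2
      have ha : f a = s := by
        have : a ∈ fib s := by rw [hfab]; simp
        simpa [hfibdef] using this
      have hb : f b = s := by
        have : b ∈ fib s := by rw [hfab]; simp
        simpa [hfibdef] using this
      rcases hab.lt_or_gt with hlt | hlt
      · exact ⟨(a, b), by simp [hE'mem, hlt, ha, hb], ha⟩
      · exact ⟨(b, a), by simp [hE'mem, hlt, ha, hb], hb⟩
    -- counting
    have hsum : ∑ s ∈ S, (fib s).card = ∑ s ∈ S \ T, (fib s).card + ∑ s ∈ T, (fib s).card :=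
      (Finset.sum_sdiff hTS).symm
    have hb1 : ∑ s ∈ S \ T, (fib s).card ≤ (S \ T).card * 1 := by
      apply Finset.sum_le_card_nsmul
      intro s hs
      have : ¬ 2 ≤ (fib s).card := by
        intro h
        have := (Finset.mem_sdiff.mp hs).2
        exact this (Finset.mem_filter.mpr ⟨(Finset.mem_sdiff.mp hs).1, h⟩)
      omega
    have hb2 : ∑ s ∈ T, (fib s).card ≤ T.card * 2 :=
      Finset.sum_le_card_nsmul _ _ _ (fun s _ => hfib2 s)
    have hsd : (S \ T).card = S.card - T.card := Finset.card_sdiff_of_subset hTS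
    have hTSle : T.card ≤ S.card := Finset.card_le_card hTS
    constructor <;> omega
  · -- construction of a piercing set of size k - M
    set p : Fin k × Fin k → ℝ := fun e =>
      if h : (Set.Icc (l e.1) (r e.1) ∩ Set.Icc (l e.2) (r e.2)).Nonempty then h.some else 0
      with hpdef
    have hp : ∀ e ∈ E, p e ∈ Set.Icc (l e.1) (r e.1) ∩ Set.Icc (l e.2) (r e.2) := by
      intro e he
      have hne := (hE.1 e he).2
      simp only [hpdef, dif_pos hne]
      exact hne.some_mem
    set U : Finset (Fin k) := Vᶜ with hUdef
    have hU : ∀ j ∈ U, ∀ e ∈ E, j ≠ e.1 ∧ j ≠ e.2 := by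
      intro j hj e he
      rw [hUdef, Finset.mem_compl, hVdef, Finset.mem_union] at hj
      constructor
      · intro h
        exact hj (Or.inl (Finset.mem_image.mpr ⟨e, he, h.symm⟩))
      · intro h
        exact hj (Or.inr (Finset.mem_image.mpr ⟨e, he, h.symm⟩))
    refine ⟨E.image p ∪ U.image l, ?_, ?_⟩
    · intro j
      by_cases hj : j ∈ V
      · rw [hVdef, Finset.mem_union] at hj
        rcases hj with hj | hj
        · obtain ⟨e, he, he1⟩ := Finset.mem_image.mp hj
          exact ⟨p e, Finset.mem_union_left _ (Finset.mem_image_of_mem p he),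
            he1 ▸ (hp e he).1⟩
        · obtain ⟨e, he, he2⟩ := Finset.mem_image.mp hj
          exact ⟨p e, Finset.mem_union_left _ (Finset.mem_image_of_mem p he),
            he2 ▸ (hp e he).2⟩
      · have hjU : j ∈ U := Finset.mem_compl.mpr hj
        exact ⟨l j, Finset.mem_union_right _ (Finset.mem_image_of_mem l hjU),
          le_refl _, hlr j⟩
    · have hpinj : Set.InjOn p ↑E := by
        intro e he e' he' hpe
        by_contra hne
        obtain ⟨h11, h12, h21, _⟩ := hE.2 e (Finset.mem_coe.mp he) e' (Finset.mem_coe.mp he') hne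
        have h1 := hp e (Finset.mem_coe.mp he)
        have h2 := hp e' (Finset.mem_coe.mp he')
        exact h3 (p e) e.1 e.2 e'.1 (ne_of_lt (hE.1 e (Finset.mem_coe.mp he)).1) h11 h21
          h1.1 h1.2 (hpe ▸ h2.1)
      have hlinj : Set.InjOn l ↑U := by
        intro j hj j' hj' hlj
        by_contra hne
        -- extend the matching
        have hjU := Finset.mem_coe.mp hj
        have hj'U := Finset.mem_coe.mp hj'
        obtain ⟨a, b, hab, hla, hlb, haU, hbU⟩ :
            ∃ a b : Fin k, a < b ∧ l a = l j ∧ l b = l j ∧ a ∈ U ∧ b ∈ U := by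
          rcases Ne.lt_or_gt hne with h | h
          · exact ⟨j, j', h, rfl, hlj.symm, hjU, hj'U⟩
          · exact ⟨j', j, h, hlj.symm, rfl, hj'U, hjU⟩
        have hnotmem : (a, b) ∉ E := fun h => (hU a haU _ h).1 rfl
        have hmatch : IsIntervalMatching k l r (insert (a, b) E) := by
          constructor
          · intro e he
            rcases Finset.mem_insert.mp he with he | he
            · subst he
              refine ⟨hab, ⟨l a, ⟨le_refl _, hlr a⟩, ?_⟩⟩
              rw [hla, ← hlb]
              exact ⟨le_refl _, hlr b⟩
            · exact hE.1 e he
          · intro e he e' he' hne'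
            rcases Finset.mem_insert.mp he with he | he <;>
              rcases Finset.mem_insert.mp he' with he' | he'
            · exact absurd (he.trans he'.symm) hne'
            · subst he
              exact ⟨(hU a haU e' he').1, (hU a haU e' he').2,
                (hU b hbU e' he').1, (hU b hbU e' he').2⟩
            · subst he'
              exact ⟨(hU a haU e he).1.symm, (hU b hbU e he).1.symm,
                (hU a haU e he).2.symm, (hU b hbU e he).2.symm⟩
            · exact hE.2 e he e' he' hne'
        have hcard : (insert (a, b) E).card = M + 1 := by
          rw [Finset.card_insert_of_notMem hnotmem, hEcard]
        have := hMax ⟨insert (a, b) E, hmatch, hcard⟩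
        omega
      have hdisj : Disjoint (E.image p) (U.image l) := by
        rw [Finset.disjoint_left]
        intro x hx1 hx2
        obtain ⟨e, he, hpe⟩ := Finset.mem_image.mp hx1
        obtain ⟨j, hj, hlj⟩ := Finset.mem_image.mp hx2
        have h1 := hp e he
        exact h3 x e.1 e.2 j (ne_of_lt (hE.1 e he).1) ((hU j hj e he).1.symm)
          ((hU j hj e he).2.symm) (hpe ▸ h1.1) (hpe ▸ h1.2)
          (hlj ▸ ⟨le_refl _, hlr j⟩)
      rw [Finset.card_union_of_disjoint hdisj, Finset.card_image_of_injOn hpinj,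
        Finset.card_image_of_injOn hlinj, hEcard]
      have hUcard : U.card = k - 2 * M := by
        rw [hUdef, Finset.card_compl, hVcard]
        simp
      omega
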